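/- Let X be a real infinite-dimensional Banach space with an unconditional Schauder basis (x_n)_{n=1}^∞ with unconditional constant K_u. Then sh((x_n)) ≤ K_u·α_{ℓ₁}(X). -/

import Mathlib

open Filter Metric NormedSpace Set Topology

noncomputable section

variable {E : Type*} [NormedAddCommGroup E] [NormedSpace ℝ E]

/-- `f` is the sequence of coordinate functionals of the Schauder basis `x`:
every vector has an expansion along `x`, and such expansions are unique. -/
structure IsSchauderBasis (x : ℕ → E) (f : ℕ → E →L[ℝ] ℝ) : Prop where
  expand : ∀ v : E,
    Tendsto (fun n => ∑ i ∈ Finset.range n, f i v • x i) atTop (𝓝 v)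
  unique : ∀ (a : ℕ → ℝ) (v : E),
    Tendsto (fun n => ∑ i ∈ Finset.range n, a i • x i) atTop (𝓝 v) → ∀ i, a i = f i v

/-- the `n`-th basis projection `P_n`. -/
def basisProj (x : ℕ → E) (f : ℕ → E →L[ℝ] ℝ) (n : ℕ) : E →L[ℝ] E :=
  ∑ i ∈ Finset.range n, (f i).smulRight (x i)

/-- closed linear span of `{y i : i ≥ n}`. -/
def tailSpan (y : ℕ → E) (n : ℕ) : Submodule ℝ E :=
  (Submodule.span ℝ (y '' {i | n ≤ i})).topologicalClosure

/-- `‖g‖_n` : the norm of the restriction of `g` to the closed span of the tail of `y`. -/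
def tailNorm (y : ℕ → E) (g : E →L[ℝ] ℝ) (n : ℕ) : ℝ :=
  ‖g.comp (tailSpan y n).subtypeL‖

/-- the quantity `sh` measuring how far a basic sequence is from being shrinking. -/
def sh (y : ℕ → E) : ℝ :=
  sSup ((fun g : E →L[ℝ] ℝ => limsup (tailNorm y g) atTop) '' {g | ‖g‖ ≤ 1})

/-- non-symmetrised Hausdorff distance `d̂(A,B)`. -/
def hdist (A B : Set E) : ℝ := sSup ((fun a => infDist a B) '' A)

/-- ordinary distance between two sets. -/
def setDist (A B : Set E) : ℝ := sInf {d : ℝ | ∃ a ∈ A, ∃ b ∈ B, d = dist a b}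

/-- `ca` measures how far a sequence is from being norm-Cauchy. -/
def ca (z : ℕ → E) : ℝ :=
  ⨅ n : ℕ, sSup {d : ℝ | ∃ k, n ≤ k ∧ ∃ l, n ≤ l ∧ d = ‖z k - z l‖}

/-- measure of non-separability. -/
def sep (A : Set E) : ℝ :=
  sInf {ε : ℝ | 0 < ε ∧ ∃ C : Set E, C.Countable ∧ ∀ a ∈ A, ∃ c ∈ C, ‖a - c‖ ≤ ε}

/-- `V`: the closed linear span of the coordinate functionals. -/
def dualSpan (g : ℕ → E →L[ℝ] ℝ) : Submodule ℝ (StrongDual ℝ E) :=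
  (Submodule.span ℝ (Set.range g)).topologicalClosure

lemma mem_dualSpan (g : ℕ → E →L[ℝ] ℝ) (i : ℕ) : g i ∈ dualSpan g :=
  Submodule.le_topologicalClosure _ (Submodule.subset_span ⟨i, rfl⟩)

/-- the quantity `bc₁` measuring non-bounded-completeness. -/
def bc1 (y : ℕ → E) : ℝ :=
  sSup {c : ℝ | ∃ a : ℕ → ℝ,
    (∀ n, ‖∑ i ∈ Finset.range n, a i • y i‖ ≤ 1) ∧
    c = ca (fun n => ∑ i ∈ Finset.range n, a i • y i)}

/-- the quantity `bc₂`. -/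
def bc2 (y : ℕ → E) (g : ℕ → E →L[ℝ] ℝ) : ℝ :=
  sSup {c : ℝ | ∃ φ : ↥(dualSpan g) →L[ℝ] ℝ, @norm (↥(dualSpan g) →L[ℝ] ℝ)
      (ContinuousLinearMap.hasOpNorm (𝕜 := ℝ) (𝕜₂ := ℝ) (E := ↥(dualSpan g)) (F := ℝ)) φ ≤ 1 ∧
    c = ca (fun n => ∑ i ∈ Finset.range n, φ ⟨g i, mem_dualSpan g i⟩ • y i)}

/-- the quantity `bc₃`. -/
def bc3 (y : ℕ → E) (g : ℕ → E →L[ℝ] ℝ) : ℝ :=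
  sSup {c : ℝ | ∃ Φ : StrongDual ℝ (StrongDual ℝ E), ‖Φ‖ ≤ 1 ∧
    c = ca (fun n => ∑ i ∈ Finset.range n, Φ (g i) • y i)}

/-- `α_Y(X)`: measures how well `Y` embeds isomorphically into `X`. -/
def alpha (Y X : Type*) [NormedAddCommGroup Y] [NormedSpace ℝ Y]
    [NormedAddCommGroup X] [NormedSpace ℝ X] : ℝ :=
  sSup {c : ℝ | ∃ T : Y →L[ℝ] X, ‖T‖ ≤ 1 ∧ ∀ y : Y, c * ‖y‖ ≤ ‖T y‖}

/-- `β_Y(X)`: measures how well `Y` embeds complementably into `X`. -/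
def beta (Y X : Type*) [NormedAddCommGroup Y] [NormedSpace ℝ Y]
    [NormedAddCommGroup X] [NormedSpace ℝ X] : ℝ :=
  sSup {c : ℝ | ∃ (A : X →L[ℝ] Y) (B : Y →L[ℝ] X),
    A.comp B = ContinuousLinearMap.id ℝ Y ∧ c * (‖A‖ * ‖B‖) ≤ 1}

/-- weak-star closure of a subset of the bidual. -/
def wstarClosure {X : Type*} [NormedAddCommGroup X] [NormedSpace ℝ X]
    (S : Set (StrongDual ℝ (StrongDual ℝ X))) : Set (StrongDual ℝ (StrongDual ℝ X)) :=
  {z | StrongDual.toWeakDual z ∈ closure (StrongDual.toWeakDual '' S)}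

/-- the measure of weak non-compactness `wk_X(A)`. -/
def wk (X : Type*) [NormedAddCommGroup X] [NormedSpace ℝ X] (A : Set X) : ℝ :=
  hdist (wstarClosure ((inclusionInDoubleDual ℝ X) '' A))
    (Set.range (inclusionInDoubleDual ℝ X))

/-- weak-star cluster points in the bidual of a sequence in `X`. -/
def wclust {X : Type*} [NormedAddCommGroup X] [NormedSpace ℝ X] (u : ℕ → X) :
    Set (StrongDual ℝ (StrongDual ℝ X)) :=
  {z | MapClusterPt (StrongDual.toWeakDual z) atTop
      (fun n => StrongDual.toWeakDual (inclusionInDoubleDual ℝ X (u n)))}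

/-- the measure of weak non-compactness `wck_X(A)`. -/
def wck (X : Type*) [NormedAddCommGroup X] [NormedSpace ℝ X] (A : Set X) : ℝ :=
  sSup {c : ℝ | ∃ u : ℕ → X, (∀ n, u n ∈ A) ∧
    c = setDist (wclust u) (Set.range (inclusionInDoubleDual ℝ X))}


/-- the canonical map `j : X → V*` for a subspace `V` of the dual,
`⟨j v, x*⟩ = x*(v)`. -/
def jfun {X : Type*} [NormedAddCommGroup X] [NormedSpace ℝ X]
    (V : Submodule ℝ (StrongDual ℝ X)) (v : X) : ↥V →L[ℝ] ℝ :=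
  (inclusionInDoubleDual ℝ X v).comp V.subtypeL

/-- the space `ℓ₁` of absolutely summable real sequences. -/
abbrev ell1 : Type := lp (fun _ : ℕ => ℝ) 1

/-- the space `c₀` of real sequences converging to zero, with the sup norm. -/
abbrev czero : Type := ZeroAtInftyContinuousMap ℕ ℝ

end
noncomputable section AuxSection

open Filter

variable {X : Type*} [NormedAddCommGroup X] [NormedSpace ℝ X]

lemma aux_coeff (x : ℕ → X) (f : ℕ → X →L[ℝ] ℝ) (hb : IsSchauderBasis x f) (i j : ℕ) :
    f i (x j) = if i = j then 1 else 0 := by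
  classical
  refine (hb.unique (fun i => if i = j then (1 : ℝ) else 0) (x j) ?_ i).symm
  have hev : ∀ᶠ n in atTop,
      (∑ k ∈ Finset.range n, (if k = j then (1 : ℝ) else 0) • x k) = x j := by
    filter_upwards [eventually_ge_atTop (j + 1)] with n hn
    have hj : j ∈ Finset.range n := Finset.mem_range.mpr (by omega)
    have hterm : ∀ k, (if k = j then (1 : ℝ) else 0) • x k
        = if k = j then x j else 0 := by
      intro k; by_cases h : k = j <;> simp [h]
    simp only [hterm]
    rw [Finset.sum_ite_eq' (Finset.range n) j (fun _ => x j), if_pos hj]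
  exact Tendsto.congr' (Filter.EventuallyEq.symm hev) tendsto_const_nhds

lemma aux_Mx (x : ℕ → X) (f : ℕ → X →L[ℝ] ℝ) (hb : IsSchauderBasis x f)
    (M : (ℕ → ℝ) → X →L[ℝ] X)
    (hM : ∀ θ : ℕ → ℝ, (∀ n, |θ n| = 1) → ∀ v : X,
      Filter.Tendsto (fun n => ∑ i ∈ Finset.range n, (θ i * f i v) • x i)
        Filter.atTop (nhds (M θ v)))
    (θ : ℕ → ℝ) (hθ : ∀ n, |θ n| = 1) (j : ℕ) : M θ (x j) = θ j • x j := by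
  classical
  refine tendsto_nhds_unique (hM θ hθ (x j)) ?_
  have hev : ∀ᶠ n in atTop,
      (∑ i ∈ Finset.range n, (θ i * f i (x j)) • x i) = θ j • x j := by
    filter_upwards [eventually_ge_atTop (j + 1)] with n hn
    have hj : j ∈ Finset.range n := Finset.mem_range.mpr (by omega)
    have hterm : ∀ k, (θ k * f k (x j)) • x k = if k = j then θ j • x j else 0 := by
      intro k
      rw [aux_coeff x f hb k j]
      by_cases h : k = j <;> simp [h]
    simp only [hterm]
    rw [Finset.sum_ite_eq' (Finset.range n) j (fun _ => θ j • x j), if_pos hj]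
  exact Tendsto.congr' (Filter.EventuallyEq.symm hev) tendsto_const_nhds

lemma aux_claimA (x : ℕ → X) (a : ℕ → ℝ)
    (hsub : ∀ U : Set ℕ, ∃ l : X, Tendsto (fun n => ∑ i ∈ Finset.range n,
      (U.indicator a i) • x i) atTop (𝓝 l)) :
    ∃ C : ℝ, ∀ F : Finset ℕ, ‖∑ i ∈ F, a i • x i‖ ≤ C := by
  classical
  by_contra hC
  push_neg at hC
  have hstep : ∀ m : ℕ, ∃ F : Finset ℕ, (∀ i ∈ F, m ≤ i) ∧
      1 < ‖∑ i ∈ F, a i • x i‖ := by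
    intro m
    set D := ∑ i ∈ Finset.range m, ‖a i • x i‖ with hD
    obtain ⟨F, hF⟩ := hC (D + 1)
    refine ⟨F.filter (fun i => m ≤ i), fun i hi => (Finset.mem_filter.mp hi).2, ?_⟩
    have hsplit : ∑ i ∈ F, a i • x i =
        (∑ i ∈ F.filter (fun i => m ≤ i), a i • x i) +
        ∑ i ∈ F.filter (fun i => ¬ m ≤ i), a i • x i :=
      (Finset.sum_filter_add_sum_filter_not F _ _).symm
    have hsmall : ‖∑ i ∈ F.filter (fun i => ¬ m ≤ i), a i • x i‖ ≤ D := by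
      refine le_trans (norm_sum_le _ _) ?_
      apply Finset.sum_le_sum_of_subset_of_nonneg
      · intro i hi
        rw [Finset.mem_range]
        have := (Finset.mem_filter.mp hi).2
        omega
      · intros; exact norm_nonneg _
    have htri := norm_add_le (∑ i ∈ F.filter (fun i => m ≤ i), a i • x i)
      (∑ i ∈ F.filter (fun i => ¬ m ≤ i), a i • x i)
    rw [← hsplit] at htri
    linarith
  choose Fm hFm1 hFm2 using hstep
  set mseq : ℕ → ℕ :=
    fun k => Nat.rec (motive := fun _ => ℕ) 0
      (fun _ mk => max mk ((Fm mk).sup id + 1)) k with hmseq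
  have hmsucc : ∀ k, mseq (k + 1) = max (mseq k) ((Fm (mseq k)).sup id + 1) :=
    fun k => rfl
  set FF : ℕ → Finset ℕ := fun k => Fm (mseq k) with hFF
  have hmono : Monotone mseq :=
    monotone_nat_of_le_succ (fun k => by rw [hmsucc]; exact le_max_left _ _)
  have hFlow : ∀ k, ∀ i ∈ FF k, mseq k ≤ i := fun k => hFm1 (mseq k)
  have hFhigh : ∀ k, ∀ i ∈ FF k, i < mseq (k + 1) := by
    intro k i hi
    have h1 : i ≤ (Fm (mseq k)).sup id := Finset.le_sup (f := id) (s := Fm (mseq k)) hi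
    have h2 : (Fm (mseq k)).sup id + 1 ≤ mseq (k + 1) := by
      rw [hmsucc]; exact le_max_right _ _
    omega
  have hFnorm : ∀ k, 1 < ‖∑ i ∈ FF k, a i • x i‖ := fun k => hFm2 (mseq k)
  have hFne : ∀ k, (FF k).Nonempty := by
    intro k
    rcases Finset.eq_empty_or_nonempty (FF k) with h | h
    · exfalso; have := hFnorm k; rw [h] at this; simp at this; linarith
    · exact h
  have hstrict : StrictMono mseq := by
    apply strictMono_nat_of_lt_succ
    intro k
    obtain ⟨i, hi⟩ := hFne k
    exact lt_of_le_of_lt (hFlow k i hi) (hFhigh k i hi)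
  set U : Set ℕ := ⋃ k, (FF k : Set ℕ) with hU
  obtain ⟨l, hl⟩ := hsub U
  have hcauchy := hl.cauchySeq
  rw [Metric.cauchySeq_iff] at hcauchy
  obtain ⟨N, hN⟩ := hcauchy 1 one_pos
  -- key identity
  have hkey : ∀ k, (∑ i ∈ Finset.range (mseq (k + 1)), (U.indicator a i) • x i) -
      (∑ i ∈ Finset.range (mseq k), (U.indicator a i) • x i) =
      ∑ i ∈ FF k, a i • x i := by
    intro k
    rw [← Finset.sum_Ico_eq_sub _ (hmono (Nat.le_succ k))]
    have hsubset : FF k ⊆ Finset.Ico (mseq k) (mseq (k + 1)) := by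
      intro i hi
      exact Finset.mem_Ico.mpr ⟨hFlow k i hi, hFhigh k i hi⟩
    have h0 : ∀ i ∈ Finset.Ico (mseq k) (mseq (k + 1)), i ∉ FF k →
        (U.indicator a i) • x i = 0 := by
      intro i hiIco hiF
      have hiU : i ∉ U := by
        intro hiU
        obtain ⟨j, hj⟩ := Set.mem_iUnion.mp hiU
        have hj' : i ∈ FF j := Finset.mem_coe.mp hj
        rcases lt_trichotomy j k with h | h | h
        · have h1 : i < mseq (j + 1) := hFhigh j i hj'
          have h2 : mseq (j + 1) ≤ mseq k := hmono h
          have h3 : mseq k ≤ i := (Finset.mem_Ico.mp hiIco).1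
          omega
        · exact hiF (h ▸ hj')
        · have h1 : mseq j ≤ i := hFlow j i hj'
          have h2 : mseq (k + 1) ≤ mseq j := hmono h
          have h3 : i < mseq (k + 1) := (Finset.mem_Ico.mp hiIco).2
          omega
      rw [Set.indicator_of_notMem hiU, zero_smul]
    rw [← Finset.sum_subset hsubset h0]
    refine Finset.sum_congr rfl (fun i hi => ?_)
    have hiU : i ∈ U := Set.mem_iUnion.mpr ⟨k, Finset.mem_coe.mpr hi⟩
    rw [Set.indicator_of_mem hiU]
  have h1 := hN (mseq (N + 1)) (le_trans (Nat.le_succ N) (hstrict.le_apply))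
    (mseq N) hstrict.le_apply
  rw [dist_eq_norm, hkey N] at h1
  linarith [hFnorm N]

lemma aux_bdd {X : Type*} [NormedAddCommGroup X] [NormedSpace ℝ X] [CompleteSpace X]
    (x : ℕ → X) (f : ℕ → X →L[ℝ] ℝ) (hb : IsSchauderBasis x f)
    (M : (ℕ → ℝ) → X →L[ℝ] X)
    (hM : ∀ θ : ℕ → ℝ, (∀ n, |θ n| = 1) → ∀ v : X,
      Filter.Tendsto (fun n => ∑ i ∈ Finset.range n, (θ i * f i v) • x i)
        Filter.atTop (nhds (M θ v))) :
    BddAbove (Set.range fun θ : {θ : ℕ → ℝ // ∀ n, |θ n| = 1} => ‖M θ.1‖) := by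
  classical
  have hpt : ∀ v : X, ∃ C, ∀ θ : {θ : ℕ → ℝ // ∀ n, |θ n| = 1}, ‖M θ.1 v‖ ≤ C := ?_
  · obtain ⟨C', hC'⟩ := banach_steinhaus hpt
    exact ⟨C', by rintro _ ⟨θ, rfl⟩; exact hC' θ⟩
  intro v
  have hsub : ∀ U : Set ℕ, ∃ l : X, Tendsto (fun n => ∑ i ∈ Finset.range n,
      (U.indicator (fun i => f i v) i) • x i) atTop (𝓝 l) := by
    intro U
    set θ : ℕ → ℝ := fun i => if i ∈ U then 1 else -1 with hθdef
    have hθ : ∀ n, |θ n| = 1 := fun n => by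
      by_cases h : n ∈ U <;> simp [θ, h]
    refine ⟨(2⁻¹ : ℝ) • (v + M θ v), ?_⟩
    have htend := ((hb.expand v).add (hM θ hθ v)).const_smul (2⁻¹ : ℝ)
    refine htend.congr (fun n => ?_)
    rw [← Finset.sum_add_distrib, Finset.smul_sum]
    refine Finset.sum_congr rfl (fun i _ => ?_)
    by_cases h : i ∈ U
    · rw [Set.indicator_of_mem h]
      have : θ i = 1 := if_pos h
      rw [this, one_mul, ← add_smul, smul_smul]
      congr 1
      ring
    · rw [Set.indicator_of_notMem h]
      have : θ i = -1 := if_neg h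
      rw [this, neg_one_mul, ← add_smul, smul_smul]
      congr 1
      ring
  obtain ⟨C, hC⟩ := aux_claimA x (fun i => f i v) hsub
  refine ⟨2 * C, ?_⟩
  rintro ⟨θ, hθ⟩
  have hpart : ∀ n, ‖∑ i ∈ Finset.range n, (θ i * f i v) • x i‖ ≤ 2 * C := by
    intro n
    have hsplit := (Finset.sum_filter_add_sum_filter_not (Finset.range n)
      (fun i => θ i = 1) (fun i => (θ i * f i v) • x i)).symm
    have h1 : ∑ i ∈ (Finset.range n).filter (fun i => θ i = 1),
        (θ i * f i v) • x i
        = ∑ i ∈ (Finset.range n).filter (fun i => θ i = 1), f i v • x i := by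
      refine Finset.sum_congr rfl (fun i hi => ?_)
      rw [(Finset.mem_filter.mp hi).2, one_mul]
    have h2 : ∑ i ∈ (Finset.range n).filter (fun i => ¬ θ i = 1),
        (θ i * f i v) • x i
        = - ∑ i ∈ (Finset.range n).filter (fun i => ¬ θ i = 1), f i v • x i := by
      rw [← Finset.sum_neg_distrib]
      refine Finset.sum_congr rfl (fun i hi => ?_)
      have hne := (Finset.mem_filter.mp hi).2
      have habs := hθ i
      rw [abs_eq (by norm_num : (0:ℝ) ≤ 1)] at habs
      rcases habs with h | h
      · exact absurd h hne
      · rw [h, neg_one_mul, neg_smul]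
    rw [hsplit, h1, h2]
    calc ‖_ + _‖ ≤ ‖∑ i ∈ (Finset.range n).filter (fun i => θ i = 1), f i v • x i‖
        + ‖- ∑ i ∈ (Finset.range n).filter (fun i => ¬ θ i = 1), f i v • x i‖ :=
          norm_add_le _ _
      _ ≤ C + C := by
          rw [norm_neg]
          exact add_le_add (hC _) (hC _)
      _ = 2 * C := by ring
  exact le_of_tendsto' (hM θ hθ v).norm hpart

lemma aux_ell1_summable (a : ell1) : Summable fun k => ‖a k‖ := by
  have h := lp.memℓp a
  rw [memℓp_gen_iff (by norm_num : (0:ℝ) < (1 : ENNReal).toReal)] at h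
  simpa using h

lemma aux_ell1_norm (a : ell1) : ‖a‖ = ∑' k, ‖a k‖ := by
  rw [lp.norm_eq_tsum_rpow (by norm_num : (0:ℝ) < (1 : ENNReal).toReal) a]
  simp [ENNReal.toReal_one, Real.rpow_one]

lemma aux_summable_norm_smul {X : Type*} [NormedAddCommGroup X] [NormedSpace ℝ X]
    {w : ℕ → X} (hw : ∀ k, ‖w k‖ ≤ 1) {b : ℕ → ℝ}
    (hbs : Summable fun k => ‖b k‖) : Summable fun k => ‖b k • w k‖ := by
  refine Summable.of_nonneg_of_le (fun k => norm_nonneg _) (fun k => ?_) hbs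
  rw [norm_smul]
  calc ‖b k‖ * ‖w k‖ ≤ ‖b k‖ * 1 :=
        mul_le_mul_of_nonneg_left (hw k) (norm_nonneg _)
    _ = ‖b k‖ := mul_one _

lemma aux_summable_smul {X : Type*} [NormedAddCommGroup X] [NormedSpace ℝ X]
    [CompleteSpace X] {w : ℕ → X} (hw : ∀ k, ‖w k‖ ≤ 1) {b : ℕ → ℝ}
    (hbs : Summable fun k => ‖b k‖) : Summable fun k => b k • w k :=
  Summable.of_norm (aux_summable_norm_smul hw hbs)

def blockMap {X : Type*} [NormedAddCommGroup X] [NormedSpace ℝ X] [CompleteSpace X]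
    (w : ℕ → X) (hw : ∀ k, ‖w k‖ ≤ 1) : ell1 →L[ℝ] X :=
  LinearMap.mkContinuous
    { toFun := fun a => ∑' k, a k • w k
      map_add' := fun a b => by
        have h1 := aux_summable_smul hw (aux_ell1_summable a)
        have h2 := aux_summable_smul hw (aux_ell1_summable b)
        simp only [lp.coeFn_add, Pi.add_apply, add_smul]
        exact Summable.tsum_add h1 h2
      map_smul' := fun c a => by
        have h1 := aux_summable_smul hw (aux_ell1_summable a)
        simp only [lp.coeFn_smul, Pi.smul_apply, smul_eq_mul, RingHom.id_apply,
          ← smul_smul]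
        exact (h1.hasSum.const_smul c).tsum_eq }
    1 (fun a => by
      rw [one_mul, aux_ell1_norm]
      refine le_trans (norm_tsum_le_tsum_norm
        (aux_summable_norm_smul hw (aux_ell1_summable a))) ?_
      refine Summable.tsum_le_tsum (fun k => ?_)
        (aux_summable_norm_smul hw (aux_ell1_summable a)) (aux_ell1_summable a)
      rw [norm_smul]
      calc ‖a k‖ * ‖w k‖ ≤ ‖a k‖ * 1 :=
            mul_le_mul_of_nonneg_left (hw k) (norm_nonneg _)
        _ = ‖a k‖ := mul_one _)

lemma blockMap_apply {X : Type*} [NormedAddCommGroup X] [NormedSpace ℝ X]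
    [CompleteSpace X] (w : ℕ → X) (hw : ∀ k, ‖w k‖ ≤ 1) (a : ell1) :
    blockMap w hw a = ∑' k, a k • w k := rfl

lemma blockMap_norm_le {X : Type*} [NormedAddCommGroup X] [NormedSpace ℝ X]
    [CompleteSpace X] (w : ℕ → X) (hw : ∀ k, ‖w k‖ ≤ 1) :
    ‖blockMap w hw‖ ≤ 1 :=
  LinearMap.mkContinuous_norm_le _ zero_le_one _

end AuxSection
set_option maxHeartbeats 2000000 in
set_option synthInstance.maxHeartbeats 400000 in
/-- Theorem 3.5: for an unconditional basis, `sh((xₙ)) ≤ K_u·α_{ℓ₁}(X)`. -/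
theorem sh_le_Ku_mul_alpha {X : Type*} [NormedAddCommGroup X] [NormedSpace ℝ X]
    [CompleteSpace X] (hinf : ¬ FiniteDimensional ℝ X)
    (x : ℕ → X) (f : ℕ → X →L[ℝ] ℝ) (hb : IsSchauderBasis x f)
    (M : (ℕ → ℝ) → X →L[ℝ] X)
    (hM : ∀ θ : ℕ → ℝ, (∀ n, |θ n| = 1) → ∀ v : X,
      Filter.Tendsto (fun n => ∑ i ∈ Finset.range n, (θ i * f i v) • x i)
        Filter.atTop (nhds (M θ v)))
    (Ku : ℝ) (hKu : Ku = ⨆ θ : {θ : ℕ → ℝ // ∀ n, |θ n| = 1}, ‖M θ.1‖) :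
    sh x ≤ Ku * alpha ell1 X := by
  classical
  haveI : Nontrivial X := by
    by_contra h
    rw [not_nontrivial_iff_subsingleton] at h
    exact hinf (by haveI := h; infer_instance)
  have hbdd := aux_bdd x f hb M hM
  have hKu1 : (1:ℝ) ≤ Ku := by
    have hM1 : ∀ v : X, M (fun _ => (1:ℝ)) v = v := by
      intro v
      refine tendsto_nhds_unique ?_ (hb.expand v)
      have h := hM (fun _ => 1) (fun n => by norm_num) v
      simpa [one_mul] using h
    have hnorm1 : ‖M (fun _ => (1:ℝ))‖ = 1 := by
      have hId : M (fun _ => (1:ℝ)) = ContinuousLinearMap.id ℝ X :=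
        ContinuousLinearMap.ext hM1
      rw [hId]
      exact ContinuousLinearMap.norm_id
    have h := le_ciSup hbdd ⟨fun _ => (1:ℝ), fun n => by norm_num⟩
    rw [hKu]
    rw [hnorm1] at h
    exact h
  have hKupos : (0:ℝ) < Ku := lt_of_lt_of_le one_pos hKu1
  have halpha_bdd : BddAbove {c : ℝ | ∃ T : ell1 →L[ℝ] X, ‖T‖ ≤ 1 ∧
      ∀ y : ell1, c * ‖y‖ ≤ ‖T y‖} := by
    refine ⟨1, ?_⟩
    rintro c ⟨T, hT1, hT2⟩
    have he : ‖(lp.single 1 0 (1:ℝ) : ell1)‖ = 1 := by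
      have h := lp.norm_single (E := fun _ : ℕ => ℝ) (p := 1)
        (by norm_num : (0:ENNReal) < 1) 0 (1:ℝ)
      simpa using h
    have h2 := hT2 (lp.single 1 0 (1:ℝ))
    rw [he, mul_one] at h2
    have h3 := T.le_opNorm (lp.single 1 0 (1:ℝ))
    rw [he, mul_one] at h3
    linarith
  have halpha_nonneg : (0:ℝ) ≤ alpha ell1 X := by
    refine le_csSup halpha_bdd ⟨0, ?_, fun y => ?_⟩
    · simp
    · simp
  have hKa : (0:ℝ) ≤ Ku * alpha ell1 X := mul_nonneg hKupos.le halpha_nonneg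
  refine Real.sSup_le ?_ hKa
  rintro b ⟨g, hg, rfl⟩
  simp only [Set.mem_setOf_eq] at hg
  dsimp only
  have htail0 : ∀ n, (0:ℝ) ≤ tailNorm x g n := by
    intro n
    unfold tailNorm
    exact ContinuousLinearMap.opNorm_nonneg _
  have htail_le : ∀ n, tailNorm x g n ≤ 1 := by
    intro n
    have h1 : ‖g.comp (tailSpan x n).subtypeL‖ ≤ ‖g‖ * ‖(tailSpan x n).subtypeL‖ :=
      g.opNorm_comp_le _
    have h2 := Submodule.norm_subtypeL_le (tailSpan x n)
    have h4 : (0:ℝ) ≤ ‖g‖ := norm_nonneg g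
    have h5 : (0:ℝ) ≤ ‖(tailSpan x n).subtypeL‖ :=
      ContinuousLinearMap.opNorm_nonneg _
    show ‖g.comp (tailSpan x n).subtypeL‖ ≤ 1
    nlinarith
  set L := limsup (tailNorm x g) atTop with hLdef
  have hL1 : L ≤ 1 := by
    apply limsup_le_of_le (isCoboundedUnder_le_of_le atTop htail0)
    exact Eventually.of_forall htail_le
  refine le_of_forall_pos_le_add (fun ε hε => ?_)
  by_cases hcsign : L - ε ≤ 0
  · linarith
  push_neg at hcsign
  set c := L - ε with hcdef
  have hfreq : ∀ m : ℕ, ∃ N, m ≤ N ∧ L - ε/2 < tailNorm x g N := by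
    have hfr : ∃ᶠ n in atTop, L - ε/2 < tailNorm x g n := by
      apply frequently_lt_of_lt_limsup (isCoboundedUnder_le_of_le atTop htail0)
      linarith
    intro m
    exact (frequently_atTop.mp hfr) m
  have hstep : ∀ m : ℕ, ∃ (F : Finset ℕ) (co : ℕ → ℝ), (∀ i ∈ F, m ≤ i) ∧
      ‖∑ i ∈ F, co i • x i‖ ≤ 1 ∧ c ≤ g (∑ i ∈ F, co i • x i) := by
    intro m
    obtain ⟨N, hNm, hN⟩ := hfreq m
    obtain ⟨u, hu1, hu2⟩ :=
      (g.comp (tailSpan x N).subtypeL).exists_lt_apply_of_lt_opNorm hN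
    rw [ContinuousLinearMap.comp_apply, Submodule.subtypeL_apply,
      Real.norm_eq_abs] at hu2
    set u' : X := if 0 ≤ g u.1 then (u.1 : X) else -u.1 with hu'def
    have hu'mem : u' ∈ tailSpan x N := by
      rw [hu'def]; split
      · exact u.2
      · exact neg_mem u.2
    have hu'norm : ‖u'‖ < 1 := by
      rw [hu'def]; split
      · exact hu1
      · rw [norm_neg]; exact hu1
    have hu'g : L - ε/2 < g u' := by
      rw [hu'def]; split
      · next h => rwa [abs_of_nonneg h] at hu2
      · next h =>
          rw [map_neg]
          rwa [abs_of_neg (lt_of_not_ge h)] at hu2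
    have hδ : (0:ℝ) < ε/4 := by linarith
    have hclos : u' ∈ closure ((Submodule.span ℝ (x '' {i | N ≤ i}) :
        Submodule ℝ X) : Set X) := by
      rw [← Submodule.topologicalClosure_coe]
      exact hu'mem
    rw [Metric.mem_closure_iff] at hclos
    obtain ⟨w₀, hw₀mem, hw₀close⟩ := hclos (ε/4) hδ
    obtain ⟨lc, hlsupp, hlcomb⟩ :=
      (Finsupp.mem_span_image_iff_linearCombination ℝ).mp hw₀mem
    rw [Finsupp.mem_supported] at hlsupp
    have hsum : ∑ i ∈ lc.support, ((1 + ε/4)⁻¹ * lc i) • x i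
        = (1 + ε/4)⁻¹ • w₀ := by
      rw [← hlcomb, Finsupp.linearCombination_apply, Finsupp.sum, Finset.smul_sum]
      exact Finset.sum_congr rfl (fun i _ => (smul_smul _ _ _).symm)
    have hw₀norm : ‖w₀‖ ≤ 1 + ε/4 := by
      have h1 : ‖w₀‖ - ‖u'‖ ≤ ‖w₀ - u'‖ := norm_sub_norm_le _ _
      have h2 : ‖w₀ - u'‖ < ε/4 := by
        rw [← dist_eq_norm, dist_comm]
        exact hw₀close
      linarith
    have hone : (0:ℝ) < 1 + ε/4 := by linarith
    refine ⟨lc.support, fun i => (1 + ε/4)⁻¹ * lc i, ?_, ?_, ?_⟩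
    · intro i hi
      have hNi : N ≤ i := hlsupp hi
      omega
    · rw [hsum, norm_smul, Real.norm_eq_abs,
        abs_of_pos (inv_pos.mpr hone)]
      calc (1 + ε/4)⁻¹ * ‖w₀‖ ≤ (1 + ε/4)⁻¹ * (1 + ε/4) :=
            mul_le_mul_of_nonneg_left hw₀norm (le_of_lt (inv_pos.mpr hone))
        _ = 1 := inv_mul_cancel₀ (ne_of_gt hone)
    · rw [hsum, map_smul, smul_eq_mul]
      have hgw₀ : L - ε/2 - ε/4 ≤ g w₀ := by
        have h1 : |g u' - g w₀| ≤ ‖u' - w₀‖ := by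
          have h := g.le_opNorm (u' - w₀)
          rw [map_sub, Real.norm_eq_abs] at h
          nlinarith [norm_nonneg (u' - w₀)]
        have h2 : ‖u' - w₀‖ < ε/4 := by
          rw [← dist_eq_norm]
          exact hw₀close
        have h3 := (abs_le.mp h1).2
        linarith
      have hkey : (1 + ε/4) * c ≤ g w₀ := by
        rw [hcdef]
        nlinarith [hgw₀, hL1, hε, mul_le_mul_of_nonneg_left hL1 hε.le,
          mul_pos hε hε]
      have h5 := mul_le_mul_of_nonneg_left hkey
        (le_of_lt (inv_pos.mpr hone))
      rw [← mul_assoc, inv_mul_cancel₀ (ne_of_gt hone), one_mul] at h5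
      exact h5
  choose F0 cc0 hp1 hp2 hp3 using hstep
  set mseq : ℕ → ℕ := fun k => Nat.rec (motive := fun _ => ℕ) 0
    (fun _ mk => max mk ((F0 mk).sup id + 1)) k with hmseqdef
  have hmsucc : ∀ k, mseq (k + 1) = max (mseq k) ((F0 (mseq k)).sup id + 1) :=
    fun k => rfl
  set FF : ℕ → Finset ℕ := fun k => F0 (mseq k) with hFFdef
  set cc : ℕ → ℕ → ℝ := fun k => cc0 (mseq k) with hccdef
  set w : ℕ → X := fun k => ∑ i ∈ FF k, cc k i • x i with hwdef0
  have hwdef : ∀ k, w k = ∑ i ∈ FF k, cc k i • x i := fun k => rfl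
  have hmono : Monotone mseq :=
    monotone_nat_of_le_succ (fun k => by rw [hmsucc]; exact le_max_left _ _)
  have hFlow : ∀ k, ∀ i ∈ FF k, mseq k ≤ i := fun k => hp1 (mseq k)
  have hFhigh : ∀ k, ∀ i ∈ FF k, i < mseq (k + 1) := by
    intro k i hi
    have h1 : i ≤ (F0 (mseq k)).sup id :=
      Finset.le_sup (f := id) (s := F0 (mseq k)) hi
    have h2 : (F0 (mseq k)).sup id + 1 ≤ mseq (k + 1) := by
      rw [hmsucc]; exact le_max_right _ _
    omega
  have hw1 : ∀ k, ‖w k‖ ≤ 1 := fun k => hp2 (mseq k)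
  have hwg : ∀ k, c ≤ g (w k) := fun k => hp3 (mseq k)
  have hdisj : ∀ k l i, i ∈ FF k → i ∈ FF l → k = l := by
    have key : ∀ k l i, k < l → i ∈ FF k → i ∈ FF l → False := by
      intro k l i hkl h1 h2
      have ha : i < mseq (k + 1) := hFhigh k i h1
      have hb2 : mseq (k + 1) ≤ mseq l := hmono hkl
      have hc2 : mseq l ≤ i := hFlow l i h2
      omega
    intro k l i h1 h2
    rcases lt_trichotomy k l with h | h | h
    · exact (key k l i h h1 h2).elim
    · exact h
    · exact (key l k i h h2 h1).elim
  set T := blockMap w hw1 with hTdef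
  have hlow : ∀ a : ell1, (c / Ku) * ‖a‖ ≤ ‖T a‖ := by
    intro a
    set σ : ℕ → ℝ := fun k => if (a k : ℝ) < 0 then -1 else 1 with hσdef
    have hσ1 : ∀ k, |σ k| = 1 := by
      intro k
      rw [hσdef]; dsimp only; split <;> simp
    set θ : ℕ → ℝ := fun i => if h : ∃ k, i ∈ FF k then σ h.choose else 1
      with hθdef
    have hθ : ∀ n, |θ n| = 1 := by
      intro n
      rw [hθdef]; dsimp only; split
      · exact hσ1 _
      · exact abs_one
    have hθF : ∀ k, ∀ i ∈ FF k, θ i = σ k := by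
      intro k i hi
      have hex : ∃ k, i ∈ FF k := ⟨k, hi⟩
      rw [hθdef]; dsimp only; rw [dif_pos hex]
      exact congrArg σ (hdisj hex.choose k i hex.choose_spec hi)
    have hσa : ∀ k, σ k * a k = |a k| := by
      intro k
      rw [hσdef]; dsimp only; split
      · next h => rw [neg_one_mul, abs_of_neg h]
      · next h => rw [one_mul, abs_of_nonneg (not_lt.mp h)]
    have hMw : ∀ k, M θ (w k) = σ k • w k := by
      intro k
      rw [hwdef k, map_sum, Finset.smul_sum]
      refine Finset.sum_congr rfl (fun i hi => ?_)
      rw [map_smul, aux_Mx x f hb M hM θ hθ i, hθF k i hi, smul_comm]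
    have hsn := aux_ell1_summable a
    have hsummable : Summable fun k => a k • w k := aux_summable_smul hw1 hsn
    have habs_sn : Summable fun k => ‖(|a k| : ℝ)‖ := by
      simpa [Real.norm_eq_abs, abs_abs] using hsn
    have habs_summable : Summable fun k => |a k| • w k :=
      aux_summable_smul hw1 habs_sn
    have hTa : T a = ∑' k, a k • w k := blockMap_apply w hw1 a
    have hMTa : M θ (T a) = ∑' k, |a k| • w k := by
      rw [hTa, ContinuousLinearMap.map_tsum _ hsummable]
      exact tsum_congr (fun k => by
        rw [map_smul, hMw k, smul_smul, mul_comm, hσa k])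
    have hg_tsum : g (M θ (T a)) = ∑' k, |a k| * g (w k) := by
      rw [hMTa, ContinuousLinearMap.map_tsum _ habs_summable]
      exact tsum_congr (fun k => by rw [map_smul, smul_eq_mul])
    have hsum_rhs : Summable fun k => |a k| * g (w k) := by
      have h := (ContinuousLinearMap.hasSum g habs_summable.hasSum).summable
      refine h.congr (fun k => ?_)
      rw [map_smul, smul_eq_mul]
    have hineq1 : c * ‖a‖ ≤ ∑' k, |a k| * g (w k) := by
      rw [aux_ell1_norm, ← tsum_mul_left]
      refine Summable.tsum_le_tsum (fun k => ?_) (hsn.mul_left c) hsum_rhs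
      rw [Real.norm_eq_abs, mul_comm c (|a k|)]
      exact mul_le_mul_of_nonneg_left (hwg k) (abs_nonneg _)
    have hMθKu : ‖M θ‖ ≤ Ku := by
      rw [hKu]
      exact le_ciSup hbdd ⟨θ, hθ⟩
    have hineq2 : ∑' k, |a k| * g (w k) ≤ Ku * ‖T a‖ := by
      rw [← hg_tsum]
      have h1 : g (M θ (T a)) ≤ ‖g‖ * ‖M θ (T a)‖ := by
        have h := g.le_opNorm (M θ (T a))
        rw [Real.norm_eq_abs] at h
        exact le_trans (le_abs_self _) h
      have h2 : ‖M θ (T a)‖ ≤ ‖M θ‖ * ‖T a‖ := (M θ).le_opNorm _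
      have h3 : ‖g‖ * ‖M θ (T a)‖ ≤ 1 * (‖M θ‖ * ‖T a‖) :=
        mul_le_mul hg h2 (norm_nonneg _) zero_le_one
      have h4 : ‖M θ‖ * ‖T a‖ ≤ Ku * ‖T a‖ :=
        mul_le_mul_of_nonneg_right hMθKu (norm_nonneg _)
      linarith
    have hfinal : c * ‖a‖ ≤ Ku * ‖T a‖ := le_trans hineq1 hineq2
    rw [div_mul_eq_mul_div, div_le_iff₀ hKupos]
    linarith [mul_comm (‖T a‖) Ku]
  have hmem : c / Ku ∈ {c : ℝ | ∃ T : ell1 →L[ℝ] X, ‖T‖ ≤ 1 ∧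
      ∀ y : ell1, c * ‖y‖ ≤ ‖T y‖} := ⟨T, blockMap_norm_le w hw1, hlow⟩
  have halpha_ge : c / Ku ≤ alpha ell1 X := le_csSup halpha_bdd hmem
  rw [div_le_iff₀ hKupos] at halpha_ge
  have := mul_comm (alpha ell1 X) Ku
  linarith
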